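/- The family SUC(X) of strongly uniformly continuous functions on a compact G-space X forms a uniformly closed G-invariant subalgebra of C(X). -/

import Mathlib

open Filter Topology

/-- `h` is strongly uniformly continuous for the action of `G` on the compact space `X`. -/
def SUC (G : Type*) {X : Type*} [Group G] [TopologicalSpace G] [TopologicalSpace X]
    [MulAction G X] (h : C(X, ℝ)) : Prop :=
  ∀ x : X, ∀ ε > (0 : ℝ), ∃ U ∈ 𝓝 (1 : G), ∀ g : G, ∀ u ∈ U,
    |h (g • x) - h (g • (u • x))| < ε

theorem stmt11 {G X : Type*} [Group G] [TopologicalSpace G] [IsTopologicalGroup G]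
    [TopologicalSpace X] [CompactSpace X] [T2Space X] [MulAction G X] [ContinuousSMul G X] :
    (∀ c : ℝ, SUC G (ContinuousMap.const X c)) ∧
    (∀ f h : C(X, ℝ), SUC G f → SUC G h → SUC G (f + h)) ∧
    (∀ f h : C(X, ℝ), SUC G f → SUC G h → SUC G (f * h)) ∧
    (∀ h : C(X, ℝ), SUC G h → ∀ g : G, ∀ h' : C(X, ℝ),
      (∀ x, h' x = h (g⁻¹ • x)) → SUC G h') ∧
    IsClosed {h : C(X, ℝ) | SUC G h} := by
  refine ⟨?_, ?_, ?_, ?_, ?_⟩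
  · intro c x ε hε
    exact ⟨Set.univ, Filter.univ_mem, fun g u _ => by simpa using hε⟩
  · intro f h hf hh x ε hε
    obtain ⟨U, hU, hUf⟩ := hf x (ε/2) (by linarith)
    obtain ⟨V, hV, hVh⟩ := hh x (ε/2) (by linarith)
    refine ⟨U ∩ V, Filter.inter_mem hU hV, fun g u hu => ?_⟩
    have h1 := hUf g u hu.1
    have h2 := hVh g u hu.2
    simp only [ContinuousMap.add_apply]
    have e : f (g • x) + h (g • x) - (f (g • (u • x)) + h (g • (u • x))) =
        (f (g • x) - f (g • (u • x))) + (h (g • x) - h (g • (u • x))) := by ring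
    rw [e]
    calc |_ + _| ≤ _ + _ := abs_add_le _ _
      _ < ε := by linarith
  · intro f h hf hh x ε hε
    set M : ℝ := ‖f‖ + ‖h‖ + 1 with hM
    have hM0 : (0:ℝ) < M := by positivity
    set δ : ℝ := ε / (2 * M) with hδdef
    have hδ : 0 < δ := by positivity
    obtain ⟨U, hU, hUf⟩ := hf x δ hδ
    obtain ⟨V, hV, hVh⟩ := hh x δ hδ
    refine ⟨U ∩ V, Filter.inter_mem hU hV, fun g u hu => ?_⟩
    have h1 := hUf g u hu.1
    have h2 := hVh g u hu.2
    have bf : |f (g • x)| ≤ ‖f‖ := f.norm_coe_le_norm _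
    have bh : |h (g • (u • x))| ≤ ‖h‖ := h.norm_coe_le_norm _
    simp only [ContinuousMap.mul_apply]
    have e : f (g • x) * h (g • x) - f (g • (u • x)) * h (g • (u • x)) =
        f (g • x) * (h (g • x) - h (g • (u • x))) +
        h (g • (u • x)) * (f (g • x) - f (g • (u • x))) := by ring
    rw [e]
    have key : |f (g • x) * (h (g • x) - h (g • (u • x)))| +
        |h (g • (u • x)) * (f (g • x) - f (g • (u • x)))| < M * δ + M * δ := by
      rw [abs_mul, abs_mul]
      have hfM : |f (g • x)| < M := by
        have : (0:ℝ) ≤ ‖h‖ := norm_nonneg _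
        linarith
      have hhM : |h (g • (u • x))| < M := by
        have : (0:ℝ) ≤ ‖f‖ := norm_nonneg _
        linarith
      have t1 : |f (g • x)| * |h (g • x) - h (g • (u • x))| < M * δ :=
        mul_lt_mul'' (lt_of_le_of_lt (le_refl _) hfM) h2 (abs_nonneg _) (abs_nonneg _)
      have t2 : |h (g • (u • x))| * |f (g • x) - f (g • (u • x))| < M * δ :=
        mul_lt_mul'' hhM h1 (abs_nonneg _) (abs_nonneg _)
      linarith
    have hMδ : M * δ + M * δ = ε := by
      field_simp [hδdef]
      rw [hδdef]; field_simp; norm_num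
    calc |_ + _| ≤ _ + _ := abs_add_le _ _
      _ < M * δ + M * δ := key
      _ = ε := hMδ
  · intro h hh g h' hh' x ε hε
    obtain ⟨U, hU, hUh⟩ := hh x ε hε
    refine ⟨U, hU, fun g₀ u hu => ?_⟩
    rw [hh' (g₀ • x), hh' (g₀ • (u • x)), smul_smul, smul_smul]
    exact hUh (g⁻¹ * g₀) u hu
  · apply isClosed_of_closure_subset
    intro h hh x ε hε
    obtain ⟨f, hfS, hfd⟩ := Metric.mem_closure_iff.mp hh (ε/3) (by linarith)
    obtain ⟨U, hU, hUf⟩ := hfS x (ε/3) (by linarith)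
    refine ⟨U, hU, fun g u hu => ?_⟩
    have h1 : dist (h (g • x)) (f (g • x)) ≤ dist h f :=
      ContinuousMap.dist_apply_le_dist _
    have h2 : dist (h (g • (u • x))) (f (g • (u • x))) ≤ dist h f :=
      ContinuousMap.dist_apply_le_dist _
    have h3 := hUf g u hu
    rw [Real.dist_eq] at h1 h2
    have A := abs_sub_le (h (g • x)) (f (g • x)) (h (g • (u • x)))
    have B := abs_sub_le (f (g • x)) (f (g • (u • x))) (h (g • (u • x)))
    have h2' : |f (g • (u • x)) - h (g • (u • x))| ≤ dist h f := by
      rw [abs_sub_comm]; exact h2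
    linarith
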